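/- Let Φ = {φ_i(x) = ρ x + a_i}_{i∈Γ} be an equicontractive homothetic self-similar IFS on ℝ^d with attractor K ⊆ B(0,1), μ the self-similar measure associated to a positive probability vector (p_i), and π : Γ^ℕ → K the natural projection. Then for every 𝚒 ∈ Γ^ℕ and k ∈ ℕ there is a probability vector (q_f(𝚒|_k))_{f∈𝒩(𝚒|_k)} such that μ_{𝚒,t} = S*_{t + k log ρ} T_{σ^k 𝚒} ( Σ_{f∈𝒩(𝚒|_k)} q_f(𝚒|_k) · fμ ) whenever t > 0 satisfies B(π(𝚒), e^{−t}) ⊆ B_{𝚒|_k}. -/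

import Mathlib

open Filter Metric MeasureTheory
open scoped ENNReal

/-- Composition `φ_𝚊` along a finite word. -/
def wordMap {Γ α : Type*} (φ : Γ → α → α) : List Γ → α → α
  | [] => id
  | i :: a => φ i ∘ wordMap φ a

/-- The first `k` letters of an infinite word, as a finite word. -/
def wordOf {Γ : Type*} (i : ℕ → Γ) (k : ℕ) : List Γ := List.ofFn (fun j : Fin k => i j)

/-- The left shift on `Γ^ℕ`. -/
def shift {Γ : Type*} (i : ℕ → Γ) : ℕ → Γ := fun n => i (n + 1)

/-- The neighbourhood system in the equicontractive case:
`𝒩(𝚊) = { φ_𝚊⁻¹ ∘ φ_𝚋 : 𝚋 ∈ Γ^{|𝚊|}, K_𝚋 ∩ B_𝚊 ≠ ∅ }`. -/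
def nbhdE {Γ : Type*} {d : ℕ}
    (φ : Γ → EuclideanSpace ℝ (Fin d) → EuclideanSpace ℝ (Fin d))
    (K : Set (EuclideanSpace ℝ (Fin d))) (a : List Γ) :
    Set (EuclideanSpace ℝ (Fin d) → EuclideanSpace ℝ (Fin d)) :=
  {f | ∃ b : List Γ, b.length = a.length ∧
    (wordMap φ b '' K ∩ wordMap φ a '' closedBall 0 1).Nonempty ∧
    wordMap φ a ∘ f = wordMap φ b}

/-- The normalized zoom-in `S*_t ν`: push forward by `y ↦ e^t y`, restrict to
`B(0,1)`, normalize. -/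
noncomputable def zoomIn {d : ℕ} (ν : Measure (EuclideanSpace ℝ (Fin d))) (t : ℝ) :
    Measure (EuclideanSpace ℝ (Fin d)) :=
  (((Measure.map (fun y => Real.exp t • y) ν).restrict (closedBall 0 1)) Set.univ)⁻¹ •
    ((Measure.map (fun y => Real.exp t • y) ν).restrict (closedBall 0 1))

/-- The scenery measure `μ_{x,t} = S*_t T_x μ`. -/
noncomputable def scenery {d : ℕ} (μ : Measure (EuclideanSpace ℝ (Fin d)))
    (x : EuclideanSpace ℝ (Fin d)) (t : ℝ) : Measure (EuclideanSpace ℝ (Fin d)) :=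
  zoomIn (Measure.map (fun y => y - x) μ) t

section helpers
variable {Γ : Type*} {E : Type*} [NormedAddCommGroup E] [NormedSpace ℝ E]
variable {ρ : ℝ} {a : Γ → E} {φ : Γ → E → E}

lemma wordMap_affine (hφ : ∀ i x, φ i x = ρ • x + a i) :
    ∀ (w : List Γ) (x : E), wordMap φ w x = ρ ^ w.length • x + wordMap φ w 0
  | [], x => by simp [wordMap]
  | i :: w, x => by
    show φ i (wordMap φ w x) = ρ ^ (w.length + 1) • x + φ i (wordMap φ w 0)
    rw [hφ, hφ, wordMap_affine hφ w x]
    rw [pow_succ]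
    rw [smul_add, smul_smul]
    ring_nf
    module

lemma wordMap_append {α : Type*} (φ : Γ → α → α) :
    ∀ (u v : List Γ) (x : α), wordMap φ (u ++ v) x = wordMap φ u (wordMap φ v x)
  | [], v, x => rfl
  | i :: u, v, x => by
    show φ i (wordMap φ (u ++ v) x) = φ i (wordMap φ u (wordMap φ v x))
    rw [wordMap_append φ u v x]

lemma shift_iterate {Γ : Type*} (i : ℕ → Γ) : ∀ (k n : ℕ), (shift^[k] i) n = i (n + k)
  | 0, n => rfl
  | k + 1, n => by
    rw [Function.iterate_succ_apply, shift_iterate (shift i) k n]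
    exact congrArg i (by omega)

lemma wordOf_add {Γ : Type*} (i : ℕ → Γ) (k m : ℕ) :
    wordOf i (k + m) = wordOf i k ++ wordOf (shift^[k] i) m := by
  unfold wordOf
  rw [List.ofFn_add]
  congr 1
  have : (fun j : Fin m => i ↑(Fin.natAdd k j)) = fun j : Fin m => (shift^[k] i) ↑j := by
    funext j
    rw [shift_iterate]
    exact congrArg i (by simp [Fin.natAdd]; omega)
  rw [this]

lemma wordMap_cont (hφ : ∀ i x, φ i x = ρ • x + a i) (w : List Γ) :
    Continuous (wordMap φ w) := by
  have : wordMap φ w = fun x => ρ ^ w.length • x + wordMap φ w 0 :=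
    funext (wordMap_affine hφ w)
  rw [this]; fun_prop

lemma map_finset_sum_meas {α β ι : Type*} [MeasurableSpace α] [MeasurableSpace β] {f : α → β}
    (hf : Measurable f) (s : Finset ι) (ν : ι → Measure α) :
    Measure.map f (∑ b ∈ s, ν b) = ∑ b ∈ s, Measure.map f (ν b) := by
  classical
  induction s using Finset.induction_on with
  | empty => simp
  | insert _ _ h ih =>
    rw [Finset.sum_insert h, Measure.map_add _ _ hf, ih, Finset.sum_insert h]

lemma restrict_finset_sum {α ι : Type*} [MeasurableSpace α] (B : Set α) (s : Finset ι)
    (ν : ι → Measure α) :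
    (∑ b ∈ s, ν b).restrict B = ∑ b ∈ s, (ν b).restrict B := by
  classical
  induction s using Finset.induction_on with
  | empty => simp
  | insert _ _ h ih =>
    rw [Finset.sum_insert h, Measure.restrict_add, ih, Finset.sum_insert h]

end helpers

/-- **Representation of the scenery via neighbourhood systems.**
For the self-similar measure `μ` of an equicontractive homothetic IFS
`φ_i(x) = ρ x + a_i`, for every `𝚒 ∈ Γ^ℕ` and `k ∈ ℕ` there is a probability
vector `(q_f)_{f ∈ 𝒩(𝚒|_k)}` with
`μ_{𝚒,t} = S*_{t + k log ρ} T_{σ^k 𝚒} (∑_f q_f · fμ)`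
whenever `t > 0` satisfies `B(π 𝚒, e^{-t}) ⊆ B_{𝚒|_k}`. -/
theorem stmt7 {Γ : Type*} [Fintype Γ] [Nonempty Γ] {d : ℕ}
    (ρ : ℝ) (hρ : ρ ∈ Set.Ioo (0 : ℝ) 1) (a : Γ → EuclideanSpace ℝ (Fin d))
    (φ : Γ → EuclideanSpace ℝ (Fin d) → EuclideanSpace ℝ (Fin d))
    (hφ : ∀ i x, φ i x = ρ • x + a i)
    (K : Set (EuclideanSpace ℝ (Fin d))) (hKc : IsCompact K) (hKne : K.Nonempty)
    (hattr : K = ⋃ i, φ i '' K) (hKball : K ⊆ closedBall 0 1)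
    (π : (ℕ → Γ) → EuclideanSpace ℝ (Fin d))
    (hπ : ∀ i : ℕ → Γ, Tendsto (fun k => wordMap φ (wordOf i k) 0) atTop (nhds (π i)))
    (p : Γ → ℝ) (hp : ∀ i, 0 < p i) (hp1 : ∑ i, p i = 1)
    (μ : Measure (EuclideanSpace ℝ (Fin d))) [IsProbabilityMeasure μ]
    (hμ : μ = ∑ i, (ENNReal.ofReal (p i)) • Measure.map (φ i) μ) :
    ∀ (i : ℕ → Γ) (k : ℕ),
      ∃ (s : Finset (EuclideanSpace ℝ (Fin d) → EuclideanSpace ℝ (Fin d)))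
        (q : (EuclideanSpace ℝ (Fin d) → EuclideanSpace ℝ (Fin d)) → ℝ≥0∞),
        (↑s : Set (EuclideanSpace ℝ (Fin d) → EuclideanSpace ℝ (Fin d)))
            = nbhdE φ K (wordOf i k) ∧
        (∑ f ∈ s, q f = 1) ∧
        ∀ t : ℝ, 0 < t →
          closedBall (π i) (Real.exp (-t)) ⊆ wordMap φ (wordOf i k) '' closedBall 0 1 →
          scenery μ (π i) t =
            zoomIn (Measure.map (fun y => y - π (shift^[k] i))
                (∑ f ∈ s, q f • Measure.map f μ)) (t + k * Real.log ρ) := by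
  intro i k
  classical
  obtain ⟨hρ0, hρ1⟩ := hρ
  have hρk : (0:ℝ) < ρ ^ k := pow_pos hρ0 k
  have hφc : ∀ j, Continuous (φ j) := fun j => by
    have : φ j = fun x => ρ • x + a j := funext (hφ j)
    rw [this]; fun_prop
  have hwm : ∀ w : List Γ, Measurable (wordMap φ w) :=
    fun w => (wordMap_cont hφ w).measurable
  set A : List Γ := wordOf i k with hA
  have hAlen : A.length = k := by simp [hA, wordOf]
  set W : (Fin k → Γ) → EuclideanSpace ℝ (Fin d) → EuclideanSpace ℝ (Fin d) := fun b => wordMap φ (List.ofFn b) with hWdef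
  have hWlen : ∀ b : Fin k → Γ, (List.ofFn b).length = k := fun b => List.length_ofFn
  set F : (Fin k → Γ) → EuclideanSpace ℝ (Fin d) → EuclideanSpace ℝ (Fin d) :=
    fun b => fun y => y + (ρ ^ k)⁻¹ • (W b 0 - wordMap φ A 0) with hFdef
  have hFm : ∀ b, Measurable (F b) := fun b => by fun_prop
  have hcompose : ∀ b : Fin k → Γ, wordMap φ A ∘ F b = W b := by
    intro b
    funext y
    show wordMap φ A (F b y) = W b y
    have h1 : wordMap φ A (F b y) = ρ ^ k • (F b y) + wordMap φ A 0 := by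
      rw [wordMap_affine hφ A, hAlen]
    have h2 : W b y = ρ ^ k • y + W b 0 := by
      show wordMap φ (List.ofFn b) y = _
      rw [wordMap_affine hφ (List.ofFn b), hWlen]
    rw [h1, h2]
    have h3 : F b y = y + (ρ ^ k)⁻¹ • (W b 0 - wordMap φ A 0) := rfl
    rw [h3, smul_add, smul_smul, mul_inv_cancel₀ (ne_of_gt hρk), one_smul]
    abel
  have hWeq : ∀ b b' : Fin k → Γ, F b = F b' → W b = W b' := by
    intro b b' h
    rw [← hcompose b, ← hcompose b', h]
  have hAinj : Function.Injective (wordMap φ A) := by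
    intro u v huv
    rw [wordMap_affine hφ A u, wordMap_affine hφ A v] at huv
    have := add_right_cancel huv
    exact smul_right_injective _ (ne_of_gt (pow_pos hρ0 A.length)) this
  set wgt : (Fin k → Γ) → ℝ≥0∞ := fun b => ∏ j, ENNReal.ofReal (p (b j)) with hwgt
  set P : (Fin k → Γ) → Prop :=
    fun b => (W b '' K ∩ wordMap φ A '' closedBall 0 1).Nonempty with hP
  set Goods : Finset (Fin k → Γ) := Finset.univ.filter P with hGoods
  set Z : ℝ≥0∞ := ∑ b ∈ Goods, wgt b with hZ
  set s : Finset (EuclideanSpace ℝ (Fin d) → EuclideanSpace ℝ (Fin d)) := Goods.image F with hs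
  set q : (EuclideanSpace ℝ (Fin d) → EuclideanSpace ℝ (Fin d)) → ℝ≥0∞ :=
    fun f => Z⁻¹ * ∑ b ∈ Goods.filter (fun b => F b = f), wgt b with hq
  -- Z is a positive finite number
  have hb0 : (fun j : Fin k => i j) ∈ Goods := by
    obtain ⟨y₀, hy₀⟩ := hKne
    refine Finset.mem_filter.mpr ⟨Finset.mem_univ _, ?_⟩
    refine ⟨wordMap φ A y₀, ⟨y₀, hy₀, rfl⟩, ⟨y₀, hKball hy₀, rfl⟩⟩
  have hwgt_pos : ∀ b : Fin k → Γ, wgt b ≠ 0 := by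
    intro b
    simp only [hwgt]
    rw [Finset.prod_ne_zero_iff]
    exact fun j _ => (ENNReal.ofReal_pos.mpr (hp _)).ne'
  have hwgt_top : ∀ b : Fin k → Γ, wgt b ≠ ⊤ := by
    intro b
    simp only [hwgt]
    exact (ENNReal.prod_lt_top (fun j _ => ENNReal.ofReal_lt_top)).ne
  have hZ0 : Z ≠ 0 := by
    intro h0
    have hle := Finset.single_le_sum (f := wgt) (fun b _ => zero_le) hb0
    rw [← hZ, h0] at hle
    exact hwgt_pos _ (le_antisymm hle zero_le)
  have hZtop : Z ≠ ⊤ := by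
    simp only [hZ]
    exact (ENNReal.sum_lt_top.mpr (fun b _ => (hwgt_top b).lt_top)).ne
  refine ⟨s, q, ?_, ?_, ?_⟩
  · -- s = nbhdE
    ext f
    simp only [hs, Finset.coe_image, Set.mem_image, Finset.mem_coe, hGoods,
      Finset.mem_filter, Finset.mem_univ, true_and, nbhdE, Set.mem_setOf_eq]
    constructor
    · rintro ⟨b, hb, rfl⟩
      exact ⟨List.ofFn b, by rw [hWlen, hAlen], hb, hcompose b⟩
    · rintro ⟨b, hlen, hne, hcomp⟩
      have hlenk : b.length = k := by rw [hlen, hAlen]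
      set b' : Fin k → Γ := fun j => b[(j : ℕ)]'(by rw [hlenk]; exact j.isLt) with hb'
      have hofn : List.ofFn b' = b := by
        apply List.ext_getElem
        · rw [List.length_ofFn, hlenk]
        · intro n h1 h2
          simp [hb']
      have hPb' : P b' := by
        simp only [hP, hWdef, hofn]
        exact hne
      refine ⟨b', hPb', ?_⟩
      have : wordMap φ A ∘ F b' = wordMap φ A ∘ f := by
        rw [hcompose b', hcomp]
        show wordMap φ (List.ofFn b') = wordMap φ b
        rw [hofn]
      funext y
      exact hAinj (congrFun this y)
  · -- sum of q = 1
    have : ∑ f ∈ s, q f = Z⁻¹ * ∑ f ∈ s, ∑ b ∈ Goods.filter (fun b => F b = f), wgt b := by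
      rw [Finset.mul_sum]
    rw [this]
    have : ∑ f ∈ s, ∑ b ∈ Goods.filter (fun b => F b = f), wgt b = ∑ b ∈ Goods, wgt b := by
      apply Finset.sum_image'
      intro b _
      rfl
    rw [this, ← hZ, ENNReal.inv_mul_cancel hZ0 hZtop]
  · -- main identity
    intro t ht htB
    set x : EuclideanSpace ℝ (Fin d) := π i with hx
    set z : EuclideanSpace ℝ (Fin d) := π (shift^[k] i) with hz
    set B : Set (EuclideanSpace ℝ (Fin d)) := closedBall (0:EuclideanSpace ℝ (Fin d)) 1 with hB
    have hBmeas : MeasurableSet B := measurableSet_closedBall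
    set g : EuclideanSpace ℝ (Fin d) → EuclideanSpace ℝ (Fin d) := fun y => Real.exp t • (y - x) with hg
    set h : EuclideanSpace ℝ (Fin d) → EuclideanSpace ℝ (Fin d) := fun y => (Real.exp t * ρ ^ k) • (y - z) with hh
    have hgm : Measurable g := by fun_prop
    have hhm : Measurable h := by fun_prop
    -- π decomposition
    have hxz : x = wordMap φ A z := by
      have h1 : Tendsto (fun m => wordMap φ (wordOf i (k + m)) 0) atTop (nhds x) := by
        have := (hπ i).comp (tendsto_add_atTop_nat k)
        have heq : (fun m => wordMap φ (wordOf i (m + k)) 0)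
            = fun m => wordMap φ (wordOf i (k + m)) 0 := by
          funext m; rw [add_comm]
        rw [← heq]
        exact this
      have h2 : (fun m => wordMap φ (wordOf i (k + m)) 0)
          = fun m => wordMap φ A (wordMap φ (wordOf (shift^[k] i) m) 0) := by
        funext m
        rw [wordOf_add, wordMap_append]
      have h3 : Tendsto (fun m => wordMap φ A (wordMap φ (wordOf (shift^[k] i) m) 0))
          atTop (nhds (wordMap φ A z)) :=
        ((wordMap_cont hφ A).tendsto _).comp (hπ (shift^[k] i))
      exact tendsto_nhds_unique (h2 ▸ h1) h3
    -- key pointwise identity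
    have hgφ : ∀ b : Fin k → Γ, g ∘ W b = h ∘ F b := by
      intro b
      funext y
      show Real.exp t • (W b y - x) = (Real.exp t * ρ ^ k) • (F b y - z)
      have h2 : W b y = ρ ^ k • y + W b 0 := by
        show wordMap φ (List.ofFn b) y = _
        rw [wordMap_affine hφ (List.ofFn b), hWlen]
      have h3 : F b y = y + (ρ ^ k)⁻¹ • (W b 0 - wordMap φ A 0) := rfl
      have h4 : x = ρ ^ k • z + wordMap φ A 0 := by
        rw [hxz, wordMap_affine hφ A, hAlen]
      rw [h2, h3, h4]
      match_scalars <;> field_simp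
    -- iterated self-similarity
    have hμn : ∀ n : ℕ, μ = ∑ b : Fin n → Γ,
        (∏ j, ENNReal.ofReal (p (b j))) • Measure.map (wordMap φ (List.ofFn b)) μ := by
      intro n
      induction n with
      | zero =>
        have huniq : ∀ b : Fin 0 → Γ,
            (∏ j, ENNReal.ofReal (p (b j))) • Measure.map (wordMap φ (List.ofFn b)) μ = μ := by
          intro b
          simp [wordMap, Measure.map_id]
        rw [Fintype.sum_congr _ _ huniq]
        simp
      | succ n ih =>
        calc μ = ∑ j : Γ, ENNReal.ofReal (p j) • Measure.map (φ j) μ := hμ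
        _ = ∑ j : Γ, ∑ b : Fin n → Γ,
            (ENNReal.ofReal (p j) * ∏ j', ENNReal.ofReal (p (b j'))) •
              Measure.map (φ j ∘ wordMap φ (List.ofFn b)) μ := by
          refine Finset.sum_congr rfl fun j _ => ?_
          conv_lhs => rw [ih]
          rw [map_finset_sum_meas (hφc j).measurable, Finset.smul_sum]
          refine Finset.sum_congr rfl fun b _ => ?_
          rw [Measure.map_smul, Measure.map_map (hφc j).measurable (hwm _), smul_smul]
        _ = ∑ b : Fin (n+1) → Γ,
            (∏ j, ENNReal.ofReal (p (b j))) • Measure.map (wordMap φ (List.ofFn b)) μ := by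
          rw [← Fintype.sum_prod_type (f := fun jb : Γ × (Fin n → Γ) =>
            (ENNReal.ofReal (p jb.1) * ∏ j', ENNReal.ofReal (p (jb.2 j'))) •
              Measure.map (φ jb.1 ∘ wordMap φ (List.ofFn jb.2)) μ)]
          apply Fintype.sum_equiv (Fin.consEquiv (fun _ => Γ))
          rintro ⟨j, b⟩
          simp only [Fin.consEquiv_apply]
          congr 1
          · rw [Fin.prod_univ_succ]
            simp [Fin.cons_zero, Fin.cons_succ]
          · congr 1
            simp only [List.ofFn_succ, Fin.cons_zero, Fin.cons_succ]
            rfl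
    -- weights sum to one
    have hwgt1 : ∀ n : ℕ, ∑ b : Fin n → Γ, (∏ j, ENNReal.ofReal (p (b j))) = 1 := by
      intro n
      have h1 : μ Set.univ = 1 := measure_univ
      conv_lhs at h1 => rw [hμn n]
      rw [Measure.finset_sum_apply] at h1
      have : ∀ b : Fin n → Γ,
          ((∏ j, ENNReal.ofReal (p (b j))) • Measure.map (wordMap φ (List.ofFn b)) μ)
            Set.univ = ∏ j, ENNReal.ofReal (p (b j)) := by
        intro b
        rw [Measure.smul_apply, smul_eq_mul,
          Measure.map_apply (hwm _) MeasurableSet.univ]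
        simp
      rw [Finset.sum_congr rfl (fun b _ => this b)] at h1
      exact h1
    -- K has full measure
    have hWK : ∀ w : List Γ, wordMap φ w '' K ⊆ K := by
      intro w
      induction w with
      | nil => simp [wordMap]
      | cons j w ih =>
        rintro y ⟨u, hu, rfl⟩
        show φ j (wordMap φ w u) ∈ K
        have h1 : wordMap φ w u ∈ K := ih ⟨u, hu, rfl⟩
        rw [hattr]
        exact Set.mem_iUnion.mpr ⟨j, Set.mem_image_of_mem _ h1⟩
    have hSε : ∀ ε : ℝ, 0 < ε → μ {y : EuclideanSpace ℝ (Fin d) | ε ≤ infDist y K} = 0 := by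
      intro ε hε
      obtain ⟨y₀, hy₀⟩ := hKne
      have hy₀n : ‖y₀‖ ≤ 1 := by
        have := hKball hy₀
        rwa [mem_closedBall_zero_iff] at this
      have hSm : MeasurableSet {y : EuclideanSpace ℝ (Fin d) | ε ≤ infDist y K} :=
        measurableSet_le measurable_const (continuous_infDist_pt K).measurable
      have key : ∀ n : ℕ, μ {y : EuclideanSpace ℝ (Fin d) | ε ≤ infDist y K} ≤ μ {y : EuclideanSpace ℝ (Fin d) | ε / ρ ^ n - 1 ≤ ‖y‖} := by
        intro n
        conv_lhs => rw [hμn n]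
        rw [Measure.finset_sum_apply]
        have hterm : ∀ b : Fin n → Γ,
            ((∏ j, ENNReal.ofReal (p (b j))) • Measure.map (wordMap φ (List.ofFn b)) μ)
              {y : EuclideanSpace ℝ (Fin d) | ε ≤ infDist y K}
            ≤ (∏ j, ENNReal.ofReal (p (b j))) * μ {y : EuclideanSpace ℝ (Fin d) | ε / ρ ^ n - 1 ≤ ‖y‖} := by
          intro b
          rw [Measure.smul_apply, smul_eq_mul, Measure.map_apply (hwm _) hSm]
          refine mul_le_mul_right (measure_mono ?_) _
          intro y hy
          simp only [Set.mem_preimage, Set.mem_setOf_eq] at hy ⊢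
          have hWy₀ : wordMap φ (List.ofFn b) y₀ ∈ K :=
            hWK _ (Set.mem_image_of_mem _ hy₀)
          have h1 : ε ≤ dist (wordMap φ (List.ofFn b) y) (wordMap φ (List.ofFn b) y₀) :=
            le_trans hy (infDist_le_dist_of_mem hWy₀)
          have h2 : dist (wordMap φ (List.ofFn b) y) (wordMap φ (List.ofFn b) y₀)
              = ρ ^ n * dist y y₀ := by
            rw [dist_eq_norm, wordMap_affine hφ _ y, wordMap_affine hφ _ y₀,
              List.length_ofFn]
            have : ρ ^ n • y + wordMap φ (List.ofFn b) 0 -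
                (ρ ^ n • y₀ + wordMap φ (List.ofFn b) 0) = ρ ^ n • (y - y₀) := by
              rw [smul_sub]; abel
            rw [this, norm_smul, Real.norm_eq_abs, abs_of_pos (pow_pos hρ0 n),
              dist_eq_norm]
          have h3 : dist y y₀ ≤ ‖y‖ + 1 := by
            calc dist y y₀ ≤ ‖y‖ + ‖y₀‖ := by
                  rw [dist_eq_norm]; exact norm_sub_le _ _
            _ ≤ ‖y‖ + 1 := by linarith
          have h4 : ε ≤ ρ ^ n * (‖y‖ + 1) := by
            calc ε ≤ ρ ^ n * dist y y₀ := h2 ▸ h1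
            _ ≤ ρ ^ n * (‖y‖ + 1) := by
                exact mul_le_mul_of_nonneg_left h3 (le_of_lt (pow_pos hρ0 n))
          have h5 : ε / ρ ^ n ≤ ‖y‖ + 1 := (div_le_iff₀ (pow_pos hρ0 n)).mpr (by linarith)
          linarith
        calc ∑ b : Fin n → Γ, ((∏ j, ENNReal.ofReal (p (b j))) •
              Measure.map (wordMap φ (List.ofFn b)) μ) {y : EuclideanSpace ℝ (Fin d) | ε ≤ infDist y K}
            ≤ ∑ b : Fin n → Γ, (∏ j, ENNReal.ofReal (p (b j))) *
              μ {y : EuclideanSpace ℝ (Fin d) | ε / ρ ^ n - 1 ≤ ‖y‖} := Finset.sum_le_sum (fun b _ => hterm b)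
        _ = (∑ b : Fin n → Γ, ∏ j, ENNReal.ofReal (p (b j))) *
              μ {y : EuclideanSpace ℝ (Fin d) | ε / ρ ^ n - 1 ≤ ‖y‖} := by rw [← Finset.sum_mul]
        _ = μ {y : EuclideanSpace ℝ (Fin d) | ε / ρ ^ n - 1 ≤ ‖y‖} := by rw [hwgt1 n, one_mul]
      have hmono : Antitone (fun n : ℕ => {y : EuclideanSpace ℝ (Fin d) | ε / ρ ^ n - 1 ≤ ‖y‖}) := by
        intro n m hnm y hy
        simp only [Set.mem_setOf_eq] at hy ⊢
        have hpow : ρ ^ m ≤ ρ ^ n := pow_le_pow_of_le_one (le_of_lt hρ0) (le_of_lt hρ1) hnm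
        have : ε / ρ ^ n ≤ ε / ρ ^ m :=
          div_le_div_of_nonneg_left (le_of_lt hε) (pow_pos hρ0 m) hpow
        linarith
      have hiInter : ⋂ n : ℕ, {y : EuclideanSpace ℝ (Fin d) | ε / ρ ^ n - 1 ≤ ‖y‖} = ∅ := by
        rw [Set.eq_empty_iff_forall_notMem]
        intro y hy
        have hlim : Tendsto (fun n : ℕ => ε / ρ ^ n) atTop atTop := by
          have h1 : Tendsto (fun n : ℕ => (ρ⁻¹) ^ n) atTop atTop :=
            tendsto_pow_atTop_atTop_of_one_lt ((one_lt_inv₀ hρ0).mpr hρ1)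
          have h2 : Tendsto (fun n : ℕ => ε * (ρ⁻¹) ^ n) atTop atTop :=
            h1.const_mul_atTop hε
          convert h2 using 2 with n
          rw [div_eq_mul_inv, inv_pow]
        obtain ⟨n, hn⟩ := (hlim.eventually_gt_atTop (‖y‖ + 1)).exists
        have := Set.mem_iInter.mp hy n
        simp only [Set.mem_setOf_eq] at this
        linarith
      have hlim0 : Tendsto (fun n : ℕ => μ {y : EuclideanSpace ℝ (Fin d) | ε / ρ ^ n - 1 ≤ ‖y‖}) atTop (nhds 0) := by
        have := tendsto_measure_iInter_atTop (μ := μ)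
          (s := fun n : ℕ => {y : EuclideanSpace ℝ (Fin d) | ε / ρ ^ n - 1 ≤ ‖y‖})
          (fun n => (measurableSet_le measurable_const measurable_norm).nullMeasurableSet)
          hmono ⟨0, measure_ne_top μ _⟩
        rwa [hiInter, measure_empty] at this
      have : μ {y : EuclideanSpace ℝ (Fin d) | ε ≤ infDist y K} ≤ 0 :=
        ge_of_tendsto hlim0 (Eventually.of_forall key)
      exact le_antisymm this zero_le
    have hK0 : μ Kᶜ = 0 := by
      have hsub : Kᶜ ⊆ ⋃ n : ℕ, {y : EuclideanSpace ℝ (Fin d) | 1 / (n + 1 : ℝ) ≤ infDist y K} := by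
        intro y hy
        have hpos : 0 < infDist y K :=
          (hKc.isClosed.notMem_iff_infDist_pos hKne).mp hy
        obtain ⟨n, hn⟩ := exists_nat_one_div_lt hpos
        exact Set.mem_iUnion.mpr ⟨n, le_of_lt hn⟩
      refine measure_mono_null hsub (measure_iUnion_null fun n => hSε _ (by positivity))
    -- the terms
    set T : (Fin k → Γ) → Measure (EuclideanSpace ℝ (Fin d)) := fun b => (Measure.map (g ∘ W b) μ).restrict B with hT
    have hbad : ∀ b : Fin k → Γ, ¬ P b → T b = 0 := by
      intro b hPb
      simp only [hT]
      rw [Measure.restrict_eq_zero]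
      rw [Measure.map_apply (hgm.comp (hwm _)) hBmeas]
      refine measure_mono_null ?_ hK0
      intro y hy
      simp only [Set.mem_preimage, Function.comp_apply] at hy
      intro hyK
      apply hPb
      have h1 : ‖Real.exp t • (W b y - x)‖ ≤ 1 := by
        have := hy
        rwa [hB, mem_closedBall_zero_iff] at this
      have h2 : dist (W b y) x ≤ Real.exp (-t) := by
        rw [norm_smul, Real.norm_eq_abs, abs_of_pos (Real.exp_pos t)] at h1
        rw [dist_eq_norm, Real.exp_neg]
        rw [← le_div_iff₀' (Real.exp_pos t)] at h1
        rwa [one_div] at h1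
      have h3 : W b y ∈ wordMap φ A '' closedBall 0 1 := htB (mem_closedBall.mpr h2)
      exact ⟨W b y, Set.mem_image_of_mem _ hyK, h3⟩
    -- L decomposition
    have hL : (Measure.map g μ).restrict B = ∑ b ∈ Goods, wgt b • T b := by
      conv_lhs => rw [hμn k]
      rw [map_finset_sum_meas hgm, restrict_finset_sum]
      have hstep : ∀ b : Fin k → Γ,
          (Measure.map g ((∏ j, ENNReal.ofReal (p (b j))) •
            Measure.map (wordMap φ (List.ofFn b)) μ)).restrict B = wgt b • T b := by
        intro b
        rw [Measure.map_smul, Measure.map_map hgm (hwm _), Measure.restrict_smul]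
      rw [Finset.sum_congr rfl (fun b _ => hstep b)]
      rw [← Finset.sum_filter_add_sum_filter_not Finset.univ P]
      have hzero : ∑ b ∈ Finset.univ.filter (fun b => ¬ P b), wgt b • T b = 0 := by
        refine Finset.sum_eq_zero fun b hb => ?_
        rw [hbad b (Finset.mem_filter.mp hb).2, smul_zero]
      rw [hzero, add_zero]
    -- R = Z⁻¹ • L
    set ν : Measure (EuclideanSpace ℝ (Fin d)) := ∑ f ∈ s, q f • Measure.map f μ with hν
    have hR : (Measure.map h ν).restrict B = Z⁻¹ • ((Measure.map g μ).restrict B) := by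
      rw [hν, map_finset_sum_meas hhm, restrict_finset_sum]
      have hstep : ∀ f ∈ s, (Measure.map h (q f • Measure.map f μ)).restrict B
          = q f • (Measure.map (h ∘ f) μ).restrict B := by
        intro f hf
        obtain ⟨b, _, rfl⟩ := Finset.mem_image.mp hf
        rw [Measure.map_smul, Measure.map_map hhm (hFm b), Measure.restrict_smul]
      rw [Finset.sum_congr rfl hstep, hL, Finset.smul_sum]
      have : ∀ b ∈ Goods, Z⁻¹ • wgt b • T b = (Z⁻¹ * wgt b) • T b := by
        intro b _; rw [smul_smul]
      rw [Finset.sum_congr rfl this]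
      apply Finset.sum_image'
      intro b hb
      rw [← hgφ b]
      show (Z⁻¹ * ∑ b' ∈ Goods.filter (fun b' => F b' = F b), wgt b') • T b
          = ∑ b' ∈ Goods.filter (fun b' => F b' = F b), (Z⁻¹ * wgt b') • T b'
      rw [Finset.mul_sum, Finset.sum_smul]
      refine Finset.sum_congr rfl fun b' hb' => ?_
      have hFeq : F b' = F b := (Finset.mem_filter.mp hb').2
      have : T b' = T b := by
        simp only [hT]
        rw [hWeq b' b hFeq]
      rw [this]
    -- conclude
    have hexp : Real.exp (t + k * Real.log ρ) = Real.exp t * ρ ^ k := by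
      rw [Real.exp_add, Real.exp_nat_mul, Real.exp_log hρ0]
    show scenery μ x t = zoomIn (Measure.map (fun y => y - z) ν) (t + k * Real.log ρ)
    rw [scenery, zoomIn, zoomIn]
    have hmapL : Measure.map (fun y => Real.exp t • y) (Measure.map (fun y => y - x) μ)
        = Measure.map g μ := by
      rw [Measure.map_map (by fun_prop) (by fun_prop)]
      rfl
    have hmapR : Measure.map (fun y => Real.exp (t + k * Real.log ρ) • y)
        (Measure.map (fun y => y - z) ν) = Measure.map h ν := by
      rw [Measure.map_map (by fun_prop) (by fun_prop)]
      congr 1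
      funext y
      simp only [Function.comp_apply, hh, hexp]
    rw [hmapL, hmapR, hR]
    rw [Measure.smul_apply, smul_eq_mul]
    set m : ℝ≥0∞ := (Measure.map g μ).restrict B Set.univ with hm
    rw [ENNReal.mul_inv (Or.inl (ENNReal.inv_ne_zero.mpr hZtop))
      (Or.inl (ENNReal.inv_ne_top.mpr hZ0)), inv_inv]
    rw [smul_smul]
    congr 1
    rw [mul_comm Z m⁻¹, mul_assoc, ENNReal.mul_inv_cancel hZ0 hZtop, mul_one]
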